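/- Let p be a prime and let V be a one-dimensional subspace of (ℤ/pℤ)². Then either 0 < h_p(V) < 2√p + 1, or there exists an integer b with 1 ≤ b ≤ ⌈√p⌉ such that 0 ≤ h_p(V) − p/b < b (as real numbers). -/

import Mathlib

set_option maxHeartbeats 1000000

lemma nathanson_core (p : ℕ) (hp : p.Prime) (A : ℤ) (hA1 : 1 ≤ A) (hA2 : A ≤ (p:ℤ) - 1)
    (h : ℕ)
    (H1 : ∀ x y : ℤ, 1 ≤ x → x ≤ (p:ℤ) - 1 → 0 ≤ y → y ≤ (p:ℤ) - 1 →
      (p:ℤ) ∣ A*x - y → (h:ℤ) ≤ x + y)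
    (H2 : ∃ x y : ℤ, 1 ≤ x ∧ x ≤ (p:ℤ)-1 ∧ 1 ≤ y ∧ y ≤ (p:ℤ)-1 ∧
      (p:ℤ) ∣ A*x - y ∧ (h:ℤ) = x + y)
    (hbig : 2*Real.sqrt p + 1 ≤ (h:ℝ)) :
    ∃ b : ℕ, 1 ≤ b ∧ (b:ℤ) ≤ ⌈Real.sqrt p⌉ ∧
      0 ≤ (h:ℝ) - p/b ∧ (h:ℝ) - p/b < b := by
  obtain ⟨x₀, y₀, hx₀1, hx₀2, hy₀1, hy₀2, hdvd₀, hsum₀⟩ := H2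
  have hp0 : (0:ℝ) < p := by exact_mod_cast hp.pos
  have hsq0 : 0 < Real.sqrt p := Real.sqrt_pos.mpr hp0
  have hsq1 : 1 ≤ Real.sqrt p := by
    rw [show (1:ℝ) = Real.sqrt 1 by simp]
    exact Real.sqrt_le_sqrt (by exact_mod_cast hp.one_lt.le)
  have hsqsq : Real.sqrt p * Real.sqrt p = p := Real.mul_self_sqrt hp0.le
  -- p ≥ 3
  have hp3 : 3 ≤ p := by
    by_contra hc
    have hp2 : p = 2 := by have := hp.two_le; omega
    have h1 : (h:ℤ) ≤ 2 := by rw [hsum₀]; subst hp2; push_cast at hx₀2 hy₀2 ⊢; omega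
    have h2 : (2:ℝ) < 2*Real.sqrt p + 1 := by nlinarith
    have : (h:ℝ) ≤ 2 := by exact_mod_cast h1
    linarith
  set Q : ℤ := ⌈Real.sqrt p⌉ with hQdef
  have hQle : Real.sqrt p ≤ (Q:ℝ) := Int.le_ceil _
  have hQlt : (Q:ℝ) < Real.sqrt p + 1 := Int.ceil_lt_add_one _
  have hQ1 : 1 ≤ Q := by
    have : (1:ℝ) ≤ (Q:ℝ) := le_trans hsq1 hQle
    exact_mod_cast this
  have hQp : Q ≤ (p:ℤ) - 1 := by
    have hsqp : Real.sqrt p ≤ (p:ℝ) - 1 := by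
      nlinarith [hsqsq, hsq0, (show (3:ℝ) ≤ p by exact_mod_cast hp3)]
    have : Q ≤ ((p:ℤ) - 1 : ℤ) := by
      apply Int.ceil_le.mpr
      push_cast
      exact hsqp
    exact this
  set n : ℕ := Q.toNat with hndef
  have hnQ : (n:ℤ) = Q := Int.toNat_of_nonneg (by omega)
  have hnpos : 0 < n := by omega
  have hnp : (n:ℤ) ≤ (p:ℤ) - 1 := by rw [hnQ]; exact hQp
  have hnR : (n:ℝ) = (Q:ℝ) := by exact_mod_cast congrArg (Int.cast : ℤ → ℝ) hnQ
  have hpZ : Prime (p:ℤ) := Nat.prime_iff_prime_int.mp hp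
  -- Dirichlet
  obtain ⟨j, k, hk0, hkn, hjk⟩ := Real.exists_int_int_abs_mul_sub_le ((A:ℝ)/p) hnpos
  have hkQ : k ≤ Q := by rw [← hnQ]; exact_mod_cast hkn
  set L : ℤ := k*A - j*p with hLdef
  have hLabs : (|L|:ℝ) < Real.sqrt p := by
    have e2 : |(L:ℝ)| ≤ (p:ℝ)/((n:ℝ)+1) := by
      have : (L:ℝ) = ((k:ℝ)*((A:ℝ)/p) - j) * p := by
        push_cast
        field_simp
        ring_nf
        simp [hLdef]
        push_cast
        ring
      rw [this, abs_mul, abs_of_pos hp0]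
      calc |(k:ℝ)*((A:ℝ)/p) - j| * p ≤ (1/((n:ℝ)+1)) * p := by
            apply mul_le_mul_of_nonneg_right hjk hp0.le
        _ = (p:ℝ)/((n:ℝ)+1) := by ring
    have e3 : (p:ℝ)/((n:ℝ)+1) < Real.sqrt p := by
      rw [div_lt_iff₀ (by rw [hnR]; linarith)]
      rw [hnR]
      nlinarith
    have : (|L|:ℝ) = |(L:ℝ)| := by push_cast; ring
    rw [this]
    linarith
  have hLQ1 : |L| ≤ Q - 1 := by
    have : (|L|:ℝ) < (Q:ℝ) := lt_of_lt_of_le hLabs hQle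
    have : |L| < Q := by exact_mod_cast this
    omega
  have habs1 : L ≤ |L| := le_abs_self L
  have habs2 : -|L| ≤ L := neg_abs_le L
  have hLne : L ≠ 0 := by
    intro h0
    have hL0 : k*A - j*(p:ℤ) = 0 := h0
    have hd : (p:ℤ) ∣ k*A := ⟨j, by linear_combination hL0⟩
    rcases hpZ.dvd_mul.mp hd with hc | hc
    · have := Int.le_of_dvd hk0 hc; omega
    · have := Int.le_of_dvd (by omega) hc; omega
  -- L ≥ 1 leads to contradiction with hbig
  have hLneg : L ≤ -1 := by
    by_contra hc
    push_neg at hc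
    have hL1 : 1 ≤ L := by omega
    have hle := H1 k L (by omega) (by omega) (by omega) (by omega) ⟨j, by rw [hLdef]; ring⟩
    have hkR : (k:ℝ) < Real.sqrt p + 1 := by
      have : (k:ℝ) ≤ (Q:ℝ) := by exact_mod_cast hkQ
      linarith
    have hLR : (L:ℝ) < Real.sqrt p := by
      have : (L:ℝ) ≤ (|L|:ℝ) := by exact_mod_cast le_abs_self L
      linarith
    have : (h:ℝ) ≤ (k:ℝ) + (L:ℝ) := by exact_mod_cast hle
    linarith
  -- initial element of S
  have hd₀ : (p:ℤ) ∣ A * k + (-L) := ⟨j, by rw [hLdef]; ring⟩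
  -- minimization setup
  set S : Set (ℕ × ℕ) := {cd | 1 ≤ cd.1 ∧ cd.1 ≤ n ∧ 1 ≤ cd.2 ∧ cd.2 ≤ n ∧
    (p:ℤ) ∣ A*(cd.1:ℤ) + (cd.2:ℤ)} with hSdef
  set key : ℕ × ℕ → ℕ := fun cd => (max cd.1 cd.2)*(2*n+2) + (cd.1 + cd.2) with hkeydef
  have hkS : (k.toNat, (-L).toNat) ∈ S := by
    constructor
    · omega
    refine ⟨by omega, by omega, by omega, ?_⟩
    have e1 : ((k.toNat:ℕ):ℤ) = k := Int.toNat_of_nonneg (by omega)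
    have e2 : (((-L).toNat:ℕ):ℤ) = -L := Int.toNat_of_nonneg (by omega)
    rw [e1, e2]
    exact hd₀
  have hTne : (key '' S).Nonempty := ⟨_, _, hkS, rfl⟩
  obtain ⟨⟨b, s⟩, hbsS, hkeyeq⟩ := Nat.sInf_mem hTne
  have hmin : ∀ cd ∈ S, key (b, s) ≤ key cd := by
    intro cd hcd
    rw [hkeyeq]
    exact Nat.sInf_le ⟨cd, hcd, rfl⟩
  obtain ⟨hb1, hbn, hs1, hsn, hdvdbs⟩ := hbsS
  simp only at hb1 hbn hs1 hsn hdvdbs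
  -- minimality in convenient form
  have hkeylt : ∀ c d : ℕ, 1 ≤ c → c ≤ n → 1 ≤ d → d ≤ n → ((p:ℤ) ∣ A*(c:ℤ) + (d:ℤ)) →
      (max c d < max b s ∨ (max c d = max b s ∧ c + d < b + s)) → False := by
    intro c d h1 h2 h3 h4 h5 hlt
    have hm := hmin (c, d) ⟨h1, h2, h3, h4, h5⟩
    simp only [hkeydef] at hm
    rcases hlt with hlt | ⟨heq, hlt⟩
    · have e1 : (max c d + 1) * (2*n+2) ≤ (max b s) * (2*n+2) :=
        Nat.mul_le_mul_right _ hlt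
      have e2 : (max c d) * (2*n+2) + (2*n+2) = (max c d + 1) * (2*n+2) := by ring
      have e3 : c + d ≤ 2*n := by omega
      omega
    · rw [heq] at hm
      omega

  -- facts about b, s as integers
  have hbZ1 : 1 ≤ (b:ℤ) := by exact_mod_cast hb1
  have hsZ1 : 1 ≤ (s:ℤ) := by exact_mod_cast hs1
  have hbZn : (b:ℤ) ≤ (n:ℤ) := by exact_mod_cast hbn
  have hsZn : (s:ℤ) ≤ (n:ℤ) := by exact_mod_cast hsn
  have hbp : (b:ℤ) ≤ (p:ℤ) - 1 := le_trans hbZn hnp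
  have hsp : (s:ℤ) ≤ (p:ℤ) - 1 := le_trans hsZn hnp
  have hpndvd_b : ¬ ((p:ℤ) ∣ (b:ℤ)) := by
    intro hc
    have := Int.le_of_dvd (by omega) hc
    omega
  have hpndvd_s : ¬ ((p:ℤ) ∣ (s:ℤ)) := by
    intro hc
    have := Int.le_of_dvd (by omega) hc
    omega
  -- gcd b s = 1
  have hgcd : Nat.gcd b s = 1 := by
    by_contra hg
    set g : ℕ := Nat.gcd b s with hgdef
    have hgb : g ∣ b := Nat.gcd_dvd_left b s
    have hgs : g ∣ s := Nat.gcd_dvd_right b s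
    have hg0 : g ≠ 0 := by
      intro h0
      have := Nat.eq_zero_of_gcd_eq_zero_left (hgdef ▸ h0)
      omega
    have hg2 : 2 ≤ g := by omega
    obtain ⟨c, hc⟩ := hgb
    obtain ⟨d, hd⟩ := hgs
    have hc1 : 1 ≤ c := by
      rcases Nat.eq_zero_or_pos c with h0 | h0
      · subst h0; simp at hc; omega
      · exact h0
    have hd1 : 1 ≤ d := by
      rcases Nat.eq_zero_or_pos d with h0 | h0
      · subst h0; simp at hd; omega
      · exact h0
    have hcb : c < b := by
      calc c < 2*c := by omega
        _ ≤ g*c := Nat.mul_le_mul_right c hg2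
        _ = b := hc.symm
    have hds : d < s := by
      calc d < 2*d := by omega
        _ ≤ g*d := Nat.mul_le_mul_right d hg2
        _ = s := hd.symm
    have hdvdcd : (p:ℤ) ∣ A*(c:ℤ) + (d:ℤ) := by
      have hfac : A*(b:ℤ) + (s:ℤ) = (g:ℤ) * (A*(c:ℤ) + (d:ℤ)) := by
        have hb' : (b:ℤ) = (g:ℤ)*(c:ℤ) := by exact_mod_cast congrArg (Nat.cast : ℕ → ℤ) hc
        have hs' : (s:ℤ) = (g:ℤ)*(d:ℤ) := by exact_mod_cast congrArg (Nat.cast : ℕ → ℤ) hd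
        rw [hb', hs']; ring
      have hpd : (p:ℤ) ∣ (g:ℤ) * (A*(c:ℤ) + (d:ℤ)) := hfac ▸ hdvdbs
      rcases hpZ.dvd_mul.mp hpd with hcase | hcase
      · exfalso
        have h1 := Int.le_of_dvd (by exact_mod_cast Nat.pos_of_ne_zero hg0) hcase
        have hgb' : (g:ℤ) ≤ (b:ℤ) := by
          have : g ≤ b := Nat.le_of_dvd (by omega) ⟨c, hc⟩
          exact_mod_cast this
        omega
      · exact hcase
    have hmaxlt : max c d < max b s := max_lt_max hcb hds
    exact hkeylt c d hc1 (by omega) hd1 (by omega) hdvdcd (Or.inl hmaxlt)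

  have hcop : IsCoprime (b:ℤ) (s:ℤ) := by
    rw [Int.isCoprime_iff_gcd_eq_one, Int.gcd_natCast_natCast]
    exact hgcd
  -- finishing move
  have hfinish : ∀ w : ℕ, 1 ≤ w → (w:ℤ) ≤ Q → (p:ℤ) ≤ (w:ℤ)*(h:ℤ) →
      (w:ℤ)*(h:ℤ) ≤ (p:ℤ) + (w:ℤ)*(w:ℤ) - (w:ℤ) →
      ∃ b : ℕ, 1 ≤ b ∧ (b:ℤ) ≤ ⌈Real.sqrt p⌉ ∧
        0 ≤ (h:ℝ) - p/b ∧ (h:ℝ) - p/b < b := by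
    intro w hw1 hwQ hlow hup
    have hw0 : (0:ℝ) < (w:ℝ) := by exact_mod_cast hw1
    refine ⟨w, hw1, by rw [← hQdef]; exact hwQ, ?_, ?_⟩
    · rw [sub_nonneg, div_le_iff₀ hw0]
      have : (p:ℝ) ≤ (w:ℝ)*(h:ℝ) := by exact_mod_cast hlow
      linarith
    · rw [sub_lt_iff_lt_add]
      rw [show (w:ℝ) + (p:ℝ)/w = ((w:ℝ)*(w:ℝ) + p)/w by field_simp]
      rw [lt_div_iff₀ hw0]
      have h1 : (w:ℝ)*(h:ℝ) ≤ (p:ℝ) + (w:ℝ)*(w:ℝ) - (w:ℝ) := by exact_mod_cast hup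
      linarith
  rcases Nat.lt_or_ge b s with hbs | hsb
  -- ============ CASE II : b ≤ s ============
  · have hbsZ : (b:ℤ) ≤ (s:ℤ) := by exact_mod_cast Nat.le_of_lt hbs
    have hs0 : (0:ℤ) < (s:ℤ) := by omega
    obtain ⟨u, v, huv⟩ := hcop  -- u*b + v*s = 1
    set Y : ℤ := (u*p - 1) % s + 1 with hYdef
    have hemod1 : 0 ≤ (u*(p:ℤ) - 1) % s := Int.emod_nonneg _ (by omega)
    have hemod2 : (u*(p:ℤ) - 1) % s < s := Int.emod_lt_of_pos _ hs0
    have hY1 : 1 ≤ Y := by omega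
    have hYs : Y ≤ (s:ℤ) := by omega
    have h1 : (s:ℤ) ∣ u*p - Y := by
      refine ⟨(u*(p:ℤ)-1)/s, ?_⟩
      have := Int.emod_def (u*(p:ℤ)-1) s
      omega
    have hmod : (s:ℤ) ∣ (p:ℤ) - (b:ℤ)*Y := by
      have hexp : (p:ℤ) - (b:ℤ)*Y = (s:ℤ)*(v*p) + (b:ℤ)*(u*p - Y) := by
        linear_combination -(p:ℤ) * huv
      rw [hexp]
      exact dvd_add (Dvd.intro _ rfl) ((h1).mul_left (b:ℤ))
    set X : ℤ := ((p:ℤ) - (b:ℤ)*Y) / s with hXdef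
    have hX : (s:ℤ)*X = (p:ℤ) - (b:ℤ)*Y := Int.mul_ediv_cancel' hmod
    have hlat : (p:ℤ) ∣ A*X - Y := by
      have hd1 : (p:ℤ) ∣ (s:ℤ)*(A*X - Y) := by
        have hexp : (s:ℤ)*(A*X - Y) = A*(p:ℤ) - Y*(A*(b:ℤ) + (s:ℤ)) := by
          linear_combination A * hX
        rw [hexp]
        exact dvd_sub (dvd_mul_left _ _) (hdvdbs.mul_left Y)
      rcases hpZ.dvd_mul.mp hd1 with hc | hc
      · exact absurd hc hpndvd_s
      · exact hc
    have hXpos : 0 ≤ X := by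
      by_contra hc
      push_neg at hc
      have hXm1 : X ≤ -1 := by omega
      -- Y ≠ s
      have hYne : Y ≤ (s:ℤ) - 1 := by
        rcases lt_or_eq_of_le hYs with hlt | heq
        · omega
        · exfalso
          have hsdvdp : (s:ℤ) ∣ (p:ℤ) := by
            refine ⟨X + b, ?_⟩
            linear_combination -hX + (b:ℤ)*heq
          have hsp' : s ∣ p := by exact_mod_cast hsdvdp
          rcases (Nat.Prime.eq_one_or_self_of_dvd hp s hsp') with h1' | h1'
          · omega
          · omega
      set c2 : ℕ := (X + b).toNat with hc2def
      set d2 : ℕ := ((s:ℤ) - Y).toNat with hd2def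
      have hXbpos : 1 ≤ X + (b:ℤ) := by
        have h2 : 0 < (s:ℤ)*(X + (b:ℤ)) := by
          have hrw : (s:ℤ)*(X + (b:ℤ)) = ((p:ℤ) - (b:ℤ)*Y) + (s:ℤ)*(b:ℤ) := by
            linear_combination hX
          rw [hrw]
          have t1 : (b:ℤ)*Y ≤ (b:ℤ)*(s:ℤ) := mul_le_mul_of_nonneg_left hYs (by omega)
          have hp1 : (1:ℤ) ≤ (p:ℤ) := by exact_mod_cast hp.pos
          have t2 : (b:ℤ)*(s:ℤ) = (s:ℤ)*(b:ℤ) := by ring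
          linarith
        by_contra hc3
        push_neg at hc3
        have t4 : (s:ℤ)*(X + (b:ℤ)) ≤ 0 :=
          mul_nonpos_of_nonneg_of_nonpos (by omega) (by omega)
        linarith
      have hc2 : (c2:ℤ) = X + b := Int.toNat_of_nonneg (by omega)
      have hd2 : (d2:ℤ) = (s:ℤ) - Y := Int.toNat_of_nonneg (by omega)
      have hdvd2 : (p:ℤ) ∣ A*(c2:ℤ) + (d2:ℤ) := by
        rw [hc2, hd2]
        have hexp : A*(X + (b:ℤ)) + ((s:ℤ) - Y) = (A*X - Y) + (A*(b:ℤ) + (s:ℤ)) := by ring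
        rw [hexp]
        exact dvd_add hlat hdvdbs
      have hdisj : max c2 d2 < max b s ∨ (max c2 d2 = max b s ∧ c2 + d2 < b + s) := by
        left
        have hmaxbs : max b s = s := max_eq_right (Nat.le_of_lt hbs)
        rw [hmaxbs]
        exact max_lt (by omega) (by omega)
      exact hkeylt c2 d2 (by omega) (by omega) (by omega) (by omega) hdvd2 hdisj
    have hX1 : 1 ≤ X := by
      rcases lt_or_eq_of_le hXpos with hlt | heq
      · omega
      · exfalso
        have hpbY : (p:ℤ) = (b:ℤ)*Y := by linear_combination -hX - (s:ℤ)*heq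
        have hd1 : (p:ℤ) ∣ (b:ℤ)*Y := ⟨1, by omega⟩
        rcases hpZ.dvd_mul.mp hd1 with hc | hc
        · exact hpndvd_b hc
        · have := Int.le_of_dvd (by omega) hc
          omega
    have hXub : X ≤ (p:ℤ) - 1 := by
      have hbY1 : (1:ℤ)*1 ≤ (b:ℤ)*Y := mul_le_mul hbZ1 hY1 (by omega) (by omega)
      have h2 : (s:ℤ)*X ≤ (p:ℤ) - 1 := by rw [hX]; linarith
      have h5 : X ≤ (s:ℤ)*X := le_mul_of_one_le_left hXpos hsZ1
      linarith
    have hup : (h:ℤ) ≤ X + Y := H1 X Y hX1 hXub (by omega) (by omega) hlat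
    have hkey1 : (s:ℤ)*(h:ℤ) ≤ (p:ℤ) + (s:ℤ)*(s:ℤ) - (s:ℤ) := by
      have h3 : (s:ℤ)*(h:ℤ) ≤ (s:ℤ)*(X + Y) := by
        apply mul_le_mul_of_nonneg_left hup (by omega)
      have hint1 : 0 ≤ ((s:ℤ) - b)*((s:ℤ) - Y) :=
        mul_nonneg (sub_nonneg.mpr hbsZ) (sub_nonneg.mpr hYs)
      have hint2 : 0 ≤ ((b:ℤ) - 1)*(s:ℤ) := mul_nonneg (sub_nonneg.mpr hbZ1) hs0.le
      linarith [hX]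
    have hkey2 : (p:ℤ) ≤ (s:ℤ)*(h:ℤ) := by
      have hdD : (p:ℤ) ∣ (s:ℤ)*x₀ + (b:ℤ)*y₀ := by
        have hexp : (s:ℤ)*x₀ + (b:ℤ)*y₀ = x₀*(A*(b:ℤ)+(s:ℤ)) - (b:ℤ)*(A*x₀ - y₀) := by ring
        rw [hexp]
        exact dvd_sub (hdvdbs.mul_left x₀) (hdvd₀.mul_left (b:ℤ))
      have hDpos : 0 < (s:ℤ)*x₀ + (b:ℤ)*y₀ := by
        have t1 : (0:ℤ) < (s:ℤ)*x₀ := mul_pos (by omega) (by omega)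
        have t2 : (0:ℤ) < (b:ℤ)*y₀ := mul_pos (by omega) (by omega)
        linarith
      have hpD := Int.le_of_dvd hDpos hdD
      have hDs : (s:ℤ)*x₀ + (b:ℤ)*y₀ ≤ (s:ℤ)*(h:ℤ) := by
        rw [hsum₀]
        have t3 : 0 ≤ ((s:ℤ) - b)*y₀ := mul_nonneg (sub_nonneg.mpr hbsZ) (by omega)
        linarith
      linarith
    exact hfinish s hs1 (by omega) hkey2 hkey1


  -- ============ CASE I : s ≤ b ============
  · have hsbZ : (s:ℤ) ≤ (b:ℤ) := by exact_mod_cast hsb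
    have hb0 : (0:ℤ) < (b:ℤ) := by omega
    obtain ⟨u, v, huv⟩ := hcop.symm  -- u*s + v*b = 1
    set X : ℤ := (u*p - 1) % b + 1 with hXdef
    have hemod1 : 0 ≤ (u*(p:ℤ) - 1) % b := Int.emod_nonneg _ (by omega)
    have hemod2 : (u*(p:ℤ) - 1) % b < b := Int.emod_lt_of_pos _ hb0
    have hX1 : 1 ≤ X := by omega
    have hXb : X ≤ (b:ℤ) := by omega
    have h1 : (b:ℤ) ∣ u*p - X := by
      refine ⟨(u*(p:ℤ)-1)/b, ?_⟩
      have := Int.emod_def (u*(p:ℤ)-1) b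
      omega
    have hmod : (b:ℤ) ∣ (p:ℤ) - (s:ℤ)*X := by
      have hexp : (p:ℤ) - (s:ℤ)*X = (b:ℤ)*(v*p) + (s:ℤ)*(u*p - X) := by
        linear_combination -(p:ℤ) * huv
      rw [hexp]
      exact dvd_add (Dvd.intro _ rfl) ((h1).mul_left (s:ℤ))
    set Y : ℤ := ((p:ℤ) - (s:ℤ)*X) / b with hYdef
    have hY : (b:ℤ)*Y = (p:ℤ) - (s:ℤ)*X := Int.mul_ediv_cancel' hmod
    have hlat : (p:ℤ) ∣ A*X - Y := by
      have hd1 : (p:ℤ) ∣ (b:ℤ)*(A*X - Y) := by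
        have hexp : (b:ℤ)*(A*X - Y) = X*(A*(b:ℤ) + (s:ℤ)) - p := by
          linear_combination -hY
        rw [hexp]
        exact dvd_sub (hdvdbs.mul_left X) dvd_rfl
      rcases hpZ.dvd_mul.mp hd1 with hc | hc
      · exact absurd hc hpndvd_b
      · exact hc
    have hYpos : 0 ≤ Y := by
      by_contra hc
      push_neg at hc
      have hYm1 : Y ≤ -1 := by omega
      have hYgt : -(s:ℤ) < Y := by
        have h3 : (s:ℤ)*X ≤ (s:ℤ)*(b:ℤ) := mul_le_mul_of_nonneg_left hXb (by omega)
        have hp1 : (1:ℤ) ≤ (p:ℤ) := by exact_mod_cast hp.pos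
        have h2 : (b:ℤ)*(-(s:ℤ)) < (b:ℤ)*Y := by
          rw [hY]
          linarith
        exact lt_of_mul_lt_mul_left h2 (by omega)
      set c2 : ℕ := X.toNat with hc2def
      set d2 : ℕ := (-Y).toNat with hd2def
      have hc2 : (c2:ℤ) = X := Int.toNat_of_nonneg (by omega)
      have hd2 : (d2:ℤ) = -Y := Int.toNat_of_nonneg (by omega)
      have hc2b : c2 ≤ b := by omega
      have hd2s : d2 ≤ s - 1 := by omega
      have hdvd2 : (p:ℤ) ∣ A*(c2:ℤ) + (d2:ℤ) := by
        rw [hc2, hd2]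
        have : A*X + -Y = A*X - Y := by ring
        rw [this]
        exact hlat
      have hdisj : max c2 d2 < max b s ∨ (max c2 d2 = max b s ∧ c2 + d2 < b + s) := by
        have hmaxbs : max b s = b := max_eq_left hsb
        rcases Nat.lt_or_ge c2 b with hlt | hge
        · left
          rw [hmaxbs]
          exact max_lt hlt (by omega)
        · right
          have hc2eq : c2 = b := by omega
          constructor
          · rw [hmaxbs, hc2eq]
            exact max_eq_left (by omega)
          · omega
      exact hkeylt c2 d2 (by omega) (by omega) (by omega) (by omega) hdvd2 hdisj
    have hYub : Y ≤ (p:ℤ) - 1 := by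
      have hsX1 : (1:ℤ)*1 ≤ (s:ℤ)*X := mul_le_mul hsZ1 hX1 (by omega) (by omega)
      have h2 : (b:ℤ)*Y ≤ (p:ℤ) - 1 := by rw [hY]; linarith
      have h5 : Y ≤ (b:ℤ)*Y := le_mul_of_one_le_left hYpos hbZ1
      linarith
    have hup : (h:ℤ) ≤ X + Y := H1 X Y hX1 (by omega) hYpos hYub hlat
    have hkey1 : (b:ℤ)*(h:ℤ) ≤ (p:ℤ) + (b:ℤ)*(b:ℤ) - (b:ℤ) := by
      have h3 : (b:ℤ)*(h:ℤ) ≤ (b:ℤ)*(X + Y) := by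
        apply mul_le_mul_of_nonneg_left hup (by omega)
      have hint1 : 0 ≤ ((b:ℤ) - s)*((b:ℤ) - X) :=
        mul_nonneg (sub_nonneg.mpr hsbZ) (sub_nonneg.mpr hXb)
      have hint2 : 0 ≤ ((s:ℤ) - 1)*(b:ℤ) := mul_nonneg (sub_nonneg.mpr hsZ1) hb0.le
      linarith [hY]
    have hkey2 : (p:ℤ) ≤ (b:ℤ)*(h:ℤ) := by
      have hdD : (p:ℤ) ∣ (s:ℤ)*x₀ + (b:ℤ)*y₀ := by
        have hexp : (s:ℤ)*x₀ + (b:ℤ)*y₀ = x₀*(A*(b:ℤ)+(s:ℤ)) - (b:ℤ)*(A*x₀ - y₀) := by ring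
        rw [hexp]
        exact dvd_sub (hdvdbs.mul_left x₀) (hdvd₀.mul_left (b:ℤ))
      have hDpos : 0 < (s:ℤ)*x₀ + (b:ℤ)*y₀ := by
        have t1 : (0:ℤ) < (s:ℤ)*x₀ := mul_pos (by omega) (by omega)
        have t2 : (0:ℤ) < (b:ℤ)*y₀ := mul_pos (by omega) (by omega)
        linarith
      have hpD := Int.le_of_dvd hDpos hdD
      have hDb : (s:ℤ)*x₀ + (b:ℤ)*y₀ ≤ (b:ℤ)*(h:ℤ) := by
        rw [hsum₀]
        have t3 : 0 ≤ ((b:ℤ) - s)*x₀ := mul_nonneg (sub_nonneg.mpr hsbZ) (by omega)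
        linarith
      linarith
    exact hfinish b hb1 (by omega) hkey2 hkey1


/-- Nathanson height of a subspace `V ⊆ (ℤ/pℤ)^n`. -/
noncomputable def nheight {p n : ℕ} (V : Submodule (ZMod p) (Fin n → ZMod p)) : ℕ :=
  sInf {k : ℕ | ∃ v ∈ V, v ≠ 0 ∧ k = ∑ i, (v i).val}

theorem nathanson_conjecture (p : ℕ) (hp : p.Prime)
    (V : Submodule (ZMod p) (Fin 2 → ZMod p)) (hV : Module.finrank (ZMod p) V = 1) :
    (0 < nheight V ∧ (nheight V : ℝ) < 2 * Real.sqrt p + 1) ∨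
    ∃ b : ℕ, 1 ≤ b ∧ (b : ℤ) ≤ ⌈Real.sqrt p⌉ ∧
      0 ≤ (nheight V : ℝ) - p / b ∧ (nheight V : ℝ) - p / b < b := by
  haveI : Fact p.Prime := ⟨hp⟩
  haveI : Fact (1 < p) := ⟨hp.one_lt⟩
  have hp0R : (0:ℝ) < p := by exact_mod_cast hp.pos
  have hsq0 : 0 < Real.sqrt p := Real.sqrt_pos.mpr hp0R
  -- generator
  obtain ⟨v, hv0, hvgen⟩ := finrank_eq_one_iff'.mp hV
  set v₀ : Fin 2 → ZMod p := (v : Fin 2 → ZMod p) with hv₀def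
  have hv₀V : v₀ ∈ V := v.2
  have hv₀0 : v₀ ≠ 0 := by
    intro hc
    apply hv0
    exact Subtype.ext hc
  have hmemS : nheight V ∈ {k : ℕ | ∃ w ∈ V, w ≠ 0 ∧ k = ∑ i, (w i).val} :=
    Nat.sInf_mem ⟨_, v₀, hv₀V, hv₀0, rfl⟩
  obtain ⟨w₁, hw₁V, hw₁0, hw₁sum⟩ := hmemS
  have hpos : 0 < nheight V := by
    rw [hw₁sum]
    have hex : ∃ i, w₁ i ≠ 0 := by
      by_contra hc
      push_neg at hc
      exact hw₁0 (funext hc)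
    obtain ⟨i, hi⟩ := hex
    have hi' : 0 < (w₁ i).val := by
      rcases Nat.eq_zero_or_pos (w₁ i).val with h0 | h0
      · exact absurd ((ZMod.val_eq_zero _).mp h0) hi
      · exact h0
    calc 0 < (w₁ i).val := hi'
      _ ≤ ∑ j, (w₁ j).val := Finset.single_le_sum (f := fun j => (w₁ j).val) (fun j _ => Nat.zero_le _) (Finset.mem_univ i)
  by_cases hsmall : (nheight V : ℝ) < 2 * Real.sqrt p + 1
  · exact Or.inl ⟨hpos, hsmall⟩
  push_neg at hsmall
  right
  have hle : ∀ w : Fin 2 → ZMod p, w ∈ V → w ≠ 0 → nheight V ≤ (w 0).val + (w 1).val := by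
    intro w hw hw0
    apply Nat.sInf_le
    exact ⟨w, hw, hw0, by rw [Fin.sum_univ_two]⟩
  have hnot1 : ¬ (nheight V ≤ 1) := by
    intro hc
    have : (nheight V : ℝ) ≤ 1 := by exact_mod_cast hc
    nlinarith
  -- v₀ 0 ≠ 0
  have hα : v₀ 0 ≠ 0 := by
    intro hc
    have h1 : v₀ 1 ≠ 0 := by
      intro hc1
      apply hv₀0
      funext i
      fin_cases i
      · exact hc
      · exact hc1
    set w : Fin 2 → ZMod p := (v₀ 1)⁻¹ • v₀ with hwdef
    have hwV : w ∈ V := V.smul_mem _ hv₀V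
    have hw1 : w 1 = 1 := by
      show (v₀ 1)⁻¹ * v₀ 1 = 1
      exact inv_mul_cancel₀ h1
    have hw0' : w 0 = 0 := by
      show (v₀ 1)⁻¹ * v₀ 0 = 0
      rw [hc, mul_zero]
    have hwne : w ≠ 0 := by
      intro hcc
      have := congrFun hcc 1
      rw [hw1] at this
      exact one_ne_zero this
    have hfin := hle w hwV hwne
    rw [hw0', hw1, ZMod.val_zero, ZMod.val_one] at hfin
    exact hnot1 hfin
  set a : ZMod p := (v₀ 0)⁻¹ * v₀ 1 with hadef
  set w : Fin 2 → ZMod p := (v₀ 0)⁻¹ • v₀ with hwdef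
  have hwV : w ∈ V := V.smul_mem _ hv₀V
  have hw0 : w 0 = 1 := by
    show (v₀ 0)⁻¹ * v₀ 0 = 1
    exact inv_mul_cancel₀ hα
  have hw1 : w 1 = a := rfl
  have hwne : w ≠ 0 := by
    intro hcc
    have := congrFun hcc 0
    rw [hw0] at this
    exact one_ne_zero this
  have ha : a ≠ 0 := by
    intro hc
    have hfin := hle w hwV hwne
    rw [hw0, hw1, hc, ZMod.val_zero, ZMod.val_one] at hfin
    exact hnot1 hfin
  set A : ℤ := (a.val : ℤ) with hAdef
  have hA1 : 1 ≤ A := by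
    have : a.val ≠ 0 := fun hc => ha ((ZMod.val_eq_zero a).mp hc)
    omega
  have hA2 : A ≤ (p:ℤ) - 1 := by
    have := ZMod.val_lt a
    omega
  have hacast : ((a.val : ℕ) : ZMod p) = a := by
    rw [ZMod.natCast_val, ZMod.cast_id]
  -- H1
  have H1 : ∀ x y : ℤ, 1 ≤ x → x ≤ (p:ℤ)-1 → 0 ≤ y → y ≤ (p:ℤ)-1 →
      (p:ℤ) ∣ A*x - y → ((nheight V : ℕ):ℤ) ≤ x + y := by
    intro x y hx1 hx2 hy0 hy2 hdvd
    set c : ZMod p := ((x.toNat : ℕ) : ZMod p) with hcdef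
    have hxval : c.val = x.toNat := ZMod.val_cast_of_lt (by omega)
    have hcne : c ≠ 0 := by
      intro hc
      rw [hc, ZMod.val_zero] at hxval
      omega
    have hxx : ((x : ℤ) : ZMod p) = c := by
      have hh : ((x.toNat : ℕ) : ZMod p) = ((x.toNat : ℤ) : ZMod p) := (Int.cast_natCast _).symm
      rw [hcdef, hh, Int.toNat_of_nonneg (show (0:ℤ) ≤ x by omega)]
    have hyy : ((y : ℤ) : ZMod p) = ((y.toNat : ℕ) : ZMod p) := by
      have hh : ((y.toNat : ℕ) : ZMod p) = ((y.toNat : ℤ) : ZMod p) := (Int.cast_natCast _).symm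
      rw [hh, Int.toNat_of_nonneg (show (0:ℤ) ≤ y by omega)]
    have hAA : ((A : ℤ) : ZMod p) = a := by
      rw [hAdef]
      push_cast
      exact hacast
    have hca : c * a = ((y.toNat : ℕ) : ZMod p) := by
      have h1 : ((A*x - y : ℤ) : ZMod p) = 0 := (ZMod.intCast_zmod_eq_zero_iff_dvd _ _).mpr hdvd
      push_cast at h1
      rw [hxx, hyy] at h1
      rw [hAA] at h1
      rw [mul_comm] at h1
      linear_combination h1
    have hcaval : (c * a).val = y.toNat := by
      rw [hca]
      exact ZMod.val_cast_of_lt (by omega)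
    set u : Fin 2 → ZMod p := c • w with hudef
    have huV : u ∈ V := V.smul_mem _ hwV
    have hu0 : u 0 = c := by
      show c * w 0 = c
      rw [hw0, mul_one]
    have hu1 : u 1 = c * a := by
      show c * w 1 = c * a
      rw [hw1]
    have hune : u ≠ 0 := by
      intro hc0
      have := congrFun hc0 0
      rw [hu0] at this
      exact hcne this
    have hfin := hle u huV hune
    rw [hu0, hu1, hxval, hcaval] at hfin
    have : ((nheight V : ℕ):ℤ) ≤ (x.toNat : ℤ) + (y.toNat : ℤ) := by exact_mod_cast hfin
    omega
  -- H2
  have H2 : ∃ x y : ℤ, 1 ≤ x ∧ x ≤ (p:ℤ)-1 ∧ 1 ≤ y ∧ y ≤ (p:ℤ)-1 ∧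
      (p:ℤ) ∣ A*x - y ∧ ((nheight V : ℕ):ℤ) = x + y := by
    obtain ⟨c, hc⟩ := hvgen ⟨w₁, hw₁V⟩
    have hcoe : c • v₀ = w₁ := congrArg Subtype.val hc
    set e : ZMod p := c * (v₀ 0) with hedef
    have hwe : w₁ = e • w := by
      rw [← hcoe]
      funext i
      show c * v₀ i = e * ((v₀ 0)⁻¹ * v₀ i)
      rw [hedef]
      field_simp
    have hene : e ≠ 0 := by
      intro hc0
      apply hw₁0
      rw [hwe, hc0, zero_smul]
    have hw₁0' : w₁ 0 = e := by
      rw [hwe]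
      show e * w 0 = e
      rw [hw0, mul_one]
    have hw₁1' : w₁ 1 = e * a := by
      rw [hwe]
      show e * w 1 = e * a
      rw [hw1]
    have heane : e * a ≠ 0 := mul_ne_zero hene ha
    refine ⟨(e.val : ℤ), ((e*a).val : ℤ), ?_, ?_, ?_, ?_, ?_, ?_⟩
    · have : e.val ≠ 0 := fun h0 => hene ((ZMod.val_eq_zero e).mp h0)
      omega
    · have := ZMod.val_lt e
      omega
    · have : (e*a).val ≠ 0 := fun h0 => heane ((ZMod.val_eq_zero _).mp h0)
      omega
    · have := ZMod.val_lt (e*a)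
      omega
    · apply (ZMod.intCast_zmod_eq_zero_iff_dvd _ _).mp
      rw [hAdef]
      push_cast
      simp only [ZMod.natCast_val, ZMod.cast_id]
      ring
    · rw [hw₁sum, Fin.sum_univ_two, hw₁0', hw₁1']
      push_cast
      ring
  exact nathanson_core p hp A hA1 hA2 (nheight V) H1 H2 hsmall
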